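/- arXiv:2002.12016 — 5 statements merged into one kernel-verified Lean document; each statement's English description precedes it below -/
import Mathlib

section
/- For ω > 0, ε > -1, a > 0 with cos(ω_ε a)·√(1+ε) ≠ i·sin(ω_ε a) where ω_ε = ω√(1+ε), the function u_T(x) = (√(1+ε)·cos(ω_ε(x−a)) + i·sin(ω_ε(x−a))) / (√(1+ε)·cos(ω_ε a) − i·sin(ω_ε a)) satisfies −u_T'' − ω²(1+ε)u_T = 0 on (0,a), u_T(0) = 1, and u_T'(a) = iω·u_T(a). -/
open Complex

/-- The explicit solution `u_T` of the transparent-boundary scattering problem with constant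
perturbation `ε`: `-u_T'' - ω²(1+ε)u_T = 0` on `(0,a)`, `u_T(0) = 1`, `u_T'(a) = iω u_T(a)`. -/
theorem transparent_solution
    (ω a ε : ℝ) (hω : 0 < ω) (ha : 0 < a) (hε : -1 < ε)
    (ωε : ℝ) (hωε : ωε = ω * Real.sqrt (1 + ε))
    (hD : (Real.sqrt (1 + ε) : ℂ) * Complex.cos (ωε * a) -
          Complex.I * Complex.sin (ωε * a) ≠ 0)
    (uT : ℝ → ℂ)
    (huT : ∀ x : ℝ, uT x =
      ((Real.sqrt (1 + ε) : ℂ) * Complex.cos (ωε * (x - a)) +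
        Complex.I * Complex.sin (ωε * (x - a))) /
      ((Real.sqrt (1 + ε) : ℂ) * Complex.cos (ωε * a) -
        Complex.I * Complex.sin (ωε * a))) :
    (∀ x ∈ Set.Ioo (0:ℝ) a,
        -(deriv (deriv uT)) x - (ω : ℂ) ^ 2 * (1 + ε) * uT x = 0) ∧
    uT 0 = 1 ∧
    deriv uT a = Complex.I * ω * uT a := by
  set s : ℂ := (Real.sqrt (1 + ε) : ℂ) with hs
  set D : ℂ := s * Complex.cos (ωε * a) - Complex.I * Complex.sin (ωε * a) with hDdef
  have hsq : s ^ 2 = (1 + ε : ℂ) := by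
    rw [hs]
    norm_cast
    rw [sq]
    exact Real.mul_self_sqrt (by linarith)
  have huT' : uT = fun x : ℝ =>
      (s * Complex.cos ((ωε : ℂ) * (x - a)) + Complex.I * Complex.sin ((ωε : ℂ) * (x - a))) / D := by
    funext x
    rw [huT x]
  have harg : ∀ x : ℝ, HasDerivAt (fun x : ℝ => (ωε : ℂ) * ((x : ℂ) - a)) (ωε : ℂ) x := by
    intro x
    have h0 : HasDerivAt (fun x : ℝ => (x : ℂ)) 1 x := by
      simpa using (hasDerivAt_id x).ofReal_comp
    simpa using ((h0.sub_const (a : ℂ)).const_mul (ωε : ℂ))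
  have hderiv1 : ∀ x : ℝ, HasDerivAt uT
      ((ωε : ℂ) * (-s * Complex.sin ((ωε : ℂ) * (x - a)) + Complex.I * Complex.cos ((ωε : ℂ) * (x - a))) / D) x := by
    intro x
    rw [huT']
    have hc : HasDerivAt (fun x : ℝ => Complex.cos ((ωε : ℂ) * ((x : ℂ) - a)))
        (-Complex.sin ((ωε : ℂ) * ((x : ℂ) - a)) * (ωε : ℂ)) x :=
      (Complex.hasDerivAt_cos _).comp x (harg x)
    have hsn : HasDerivAt (fun x : ℝ => Complex.sin ((ωε : ℂ) * ((x : ℂ) - a)))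
        (Complex.cos ((ωε : ℂ) * ((x : ℂ) - a)) * (ωε : ℂ)) x :=
      (Complex.hasDerivAt_sin _).comp x (harg x)
    have := ((hc.const_mul s).add (hsn.const_mul Complex.I)).div_const D
    convert this using 1
    · rfl
    · rfl
    · ring
  have hderivuT : deriv uT = fun x : ℝ =>
      (ωε : ℂ) * (-s * Complex.sin ((ωε : ℂ) * (x - a)) + Complex.I * Complex.cos ((ωε : ℂ) * (x - a))) / D := by
    funext x; exact (hderiv1 x).deriv
  have hderiv2 : ∀ x : ℝ, HasDerivAt (deriv uT)
      ((ωε : ℂ) ^ 2 * (-s * Complex.cos ((ωε : ℂ) * (x - a)) - Complex.I * Complex.sin ((ωε : ℂ) * (x - a))) / D) x := by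
    intro x
    rw [hderivuT]
    have hc : HasDerivAt (fun x : ℝ => Complex.cos ((ωε : ℂ) * ((x : ℂ) - a)))
        (-Complex.sin ((ωε : ℂ) * ((x : ℂ) - a)) * (ωε : ℂ)) x :=
      (Complex.hasDerivAt_cos _).comp x (harg x)
    have hsn : HasDerivAt (fun x : ℝ => Complex.sin ((ωε : ℂ) * ((x : ℂ) - a)))
        (Complex.cos ((ωε : ℂ) * ((x : ℂ) - a)) * (ωε : ℂ)) x :=
      (Complex.hasDerivAt_sin _).comp x (harg x)
    have := (((hsn.const_mul (-s)).add (hc.const_mul Complex.I)).const_mul (ωε : ℂ)).div_const D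
    convert this using 1
    · rfl
    · rfl
    · ring
  have hωε2 : ((ωε : ℂ)) ^ 2 = (ω : ℂ) ^ 2 * (1 + ε) := by
    rw [← hsq, hωε]
    push_cast
    ring
  refine ⟨?_, ?_, ?_⟩
  · intro x _
    have h2 := (hderiv2 x).deriv
    rw [h2, huT']
    field_simp
    rw [hωε2] at *
    ring
  · rw [huT 0, div_eq_one_iff_eq hD]
    push_cast
    rw [show (ωε:ℂ) * (0 - a) = -(ωε * a) by ring, Complex.cos_neg, Complex.sin_neg]
    ring
  · rw [(hderiv1 a).deriv, huT a]
    simp only [sub_self, mul_zero, Complex.cos_zero, Complex.sin_zero]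
    rw [hωε, hs]
    push_cast
    field_simp
    ring
end

section
/- With u_T as above, the perturbed transparent DtN number DtN_T(ε) := −u_T'(0) equals −iω − ωε·sin(ω_ε a)/(√(1+ε)·cos(ω_ε a) − i·sin(ω_ε a)). -/
open Complex

/-- The perturbed transparent DtN number: `-u_T'(0) = -iω - ωε·sin(ω_ε a)/D`. -/
theorem transparent_DtN_number
    (ω a ε : ℝ) (hω : 0 < ω) (ha : 0 < a) (hε : -1 < ε)
    (ωε : ℝ) (hωε : ωε = ω * Real.sqrt (1 + ε))
    (hD : (Real.sqrt (1 + ε) : ℂ) * Complex.cos (ωε * a) -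
          Complex.I * Complex.sin (ωε * a) ≠ 0)
    (uT : ℝ → ℂ)
    (huT : ∀ x : ℝ, uT x =
      ((Real.sqrt (1 + ε) : ℂ) * Complex.cos (ωε * (x - a)) +
        Complex.I * Complex.sin (ωε * (x - a))) /
      ((Real.sqrt (1 + ε) : ℂ) * Complex.cos (ωε * a) -
        Complex.I * Complex.sin (ωε * a))) :
    -(deriv uT 0) =
      -Complex.I * ω - (ω : ℂ) * ε * Complex.sin (ωε * a) /
        ((Real.sqrt (1 + ε) : ℂ) * Complex.cos (ωε * a) -
          Complex.I * Complex.sin (ωε * a)) := by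
  set s : ℝ := Real.sqrt (1 + ε) with hs
  set D : ℂ := (s : ℂ) * Complex.cos (ωε * a) - Complex.I * Complex.sin (ωε * a) with hDdef
  have hs2 : s ^ 2 = 1 + ε := Real.sq_sqrt (by linarith)
  have hs2c : (s : ℂ) ^ 2 = 1 + ε := by exact_mod_cast congrArg (Complex.ofReal) hs2
  have hinner : ∀ x : ℝ, HasDerivAt (fun x : ℝ => ωε * (x - a)) ωε x := by
    intro x
    simpa using ((hasDerivAt_id x).sub_const a).const_mul ωε
  have hf : HasDerivAt (fun x : ℝ => s * Real.cos (ωε * (x - a)))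
      (s * (ωε * Real.sin (ωε * a))) 0 := by
    have := ((hinner 0).cos).const_mul s
    simpa [mul_comm, mul_left_comm, mul_assoc] using this
  have hg : HasDerivAt (fun x : ℝ => Real.sin (ωε * (x - a)))
      (ωε * Real.cos (ωε * a)) 0 := by
    have := (hinner 0).sin
    simpa [Real.cos_neg, mul_comm] using this
  have hu : HasDerivAt uT
      ((((s * (ωε * Real.sin (ωε * a)) : ℝ) : ℂ) +
        Complex.I * ((ωε * Real.cos (ωε * a) : ℝ) : ℂ)) / D) 0 := by
    have h1 : HasDerivAt (fun x : ℝ =>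
        ((((s * Real.cos (ωε * (x - a)) : ℝ) : ℂ) +
          Complex.I * ((Real.sin (ωε * (x - a)) : ℝ) : ℂ)) / D))
        ((((s * (ωε * Real.sin (ωε * a)) : ℝ) : ℂ) +
          Complex.I * ((ωε * Real.cos (ωε * a) : ℝ) : ℂ)) / D) 0 :=
      (hf.ofReal_comp.add ((hg.ofReal_comp).const_mul Complex.I)).div_const D
    have heq : uT = fun x : ℝ =>
        ((((s * Real.cos (ωε * (x - a)) : ℝ) : ℂ) +
          Complex.I * ((Real.sin (ωε * (x - a)) : ℝ) : ℂ)) / D) := by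
      funext x
      rw [huT x]
      push_cast [Complex.ofReal_cos, Complex.ofReal_sin]
      ring
    rw [heq]
    exact h1
  have key : (((s * (ωε * Real.sin (ωε * a)) : ℝ) : ℂ) +
        Complex.I * ((ωε * Real.cos (ωε * a) : ℝ) : ℂ)) =
      Complex.I * ω * D + ω * ε * Complex.sin (ωε * a) := by
    rw [hDdef, hωε]
    push_cast [Complex.ofReal_cos, Complex.ofReal_sin]
    linear_combination (Complex.sin ((ω : ℂ) * (s : ℂ) * (a : ℂ)) * ω) * hs2c +
      (ω * Complex.sin ((ω : ℂ) * (s : ℂ) * (a : ℂ))) * Complex.I_sq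
  rw [hu.deriv, key]
  field_simp
  ring
end

section
/- Define DtN_T(ε) := −iω − ωε·sin(ω_ε a)/(√(1+ε)·cos(ω_ε a) − i·sin(ω_ε a)) with ω_ε = ω√(1+ε). Then the relative error Δ_T(ε,ω) := |DtN_T(0) − DtN_T(ε)| / |DtN_T(0)| equals ε·|sin(ω_ε a)| / √(1 + ε·cos(ω_ε a)²). -/
open Complex

/-- The relative error of the transparent DtN number:
`Δ_T(ε,ω) = ε·|sin(ω_ε a)| / √(1 + ε·cos²(ω_ε a))`. -/
theorem transparent_DtN_relative_error
    (ω a ε : ℝ) (hω : 0 < ω) (ha : 0 < a) (hε : 0 ≤ ε)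
    (ωε : ℝ) (hωε : ωε = ω * Real.sqrt (1 + ε))
    (DtNT : ℝ → ℂ)
    (hDtN : ∀ e : ℝ, DtNT e =
      -Complex.I * ω - (ω : ℂ) * e *
        Complex.sin (ω * Real.sqrt (1 + e) * a) /
        ((Real.sqrt (1 + e) : ℂ) * Complex.cos (ω * Real.sqrt (1 + e) * a) -
          Complex.I * Complex.sin (ω * Real.sqrt (1 + e) * a))) :
    ‖DtNT 0 - DtNT ε‖ / ‖DtNT 0‖ =
      ε * |Real.sin (ωε * a)| / Real.sqrt (1 + ε * Real.cos (ωε * a) ^ 2) := by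
  have h0 : DtNT 0 = -Complex.I * ω := by
    rw [hDtN 0]; norm_num
  set s : ℝ := Real.sqrt (1 + ε) with hsdef
  have hθc : (ω : ℂ) * (s : ℂ) * a = ((ωε * a : ℝ) : ℂ) := by
    rw [hωε]; push_cast; ring
  set θ : ℝ := ωε * a with hθdef
  have hdiff : DtNT 0 - DtNT ε =
      (ω : ℂ) * ε * ((Real.sin θ : ℝ) : ℂ) /
        ((s : ℂ) * ((Real.cos θ : ℝ) : ℂ) - Complex.I * ((Real.sin θ : ℝ) : ℂ)) := by
    rw [h0, hDtN ε, hθc, Complex.ofReal_sin, Complex.ofReal_cos]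
    ring
  have hDabs : ‖(s : ℂ) * ((Real.cos θ : ℝ) : ℂ) -
      Complex.I * ((Real.sin θ : ℝ) : ℂ)‖ = Real.sqrt (1 + ε * Real.cos θ ^ 2) := by
    have hre : ((s : ℂ) * ((Real.cos θ : ℝ) : ℂ) - Complex.I * ((Real.sin θ : ℝ) : ℂ)).re
        = s * Real.cos θ := by simp [Complex.cos_ofReal_re]
    have him : ((s : ℂ) * ((Real.cos θ : ℝ) : ℂ) - Complex.I * ((Real.sin θ : ℝ) : ℂ)).im
        = -Real.sin θ := by simp [Complex.sin_ofReal_re]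
    rw [Complex.norm_def, Complex.normSq_apply, hre, him]
    congr 1
    have hs2 : s * s = 1 + ε := Real.mul_self_sqrt (by linarith)
    have hpyth : Real.sin θ ^ 2 + Real.cos θ ^ 2 = 1 := Real.sin_sq_add_cos_sq θ
    nlinarith [hpyth, hs2]
  have h0abs : ‖DtNT 0‖ = ω := by
    rw [h0]
    simp [Complex.norm_real, abs_of_pos hω]
  rw [hdiff, h0abs, norm_div, norm_mul, norm_mul, hDabs]
  simp only [Complex.norm_real, Real.norm_eq_abs]
  rw [abs_of_pos hω, _root_.abs_of_nonneg hε]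
  field_simp
end

section
/- For all ω, a > 0 and ε ≥ 0, the relative transparent DtN error satisfies Δ_T(ε,ω) = ε·|sin(ω_ε a)|/√(1 + ε·cos(ω_ε a)²) ≤ ε. In particular the bound is independent of ω. -/
open Complex

/-- The relative transparent DtN error satisfies
`Δ_T(ε,ω) = ε·|sin(ω_ε a)|/√(1 + ε·cos²(ω_ε a)) ≤ ε`, a bound independent of `ω`. -/
theorem transparent_DtN_error_bound
    (ω a ε : ℝ) (hω : 0 < ω) (ha : 0 < a) (hε : 0 ≤ ε)
    (ωε : ℝ) (hωε : ωε = ω * Real.sqrt (1 + ε))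
    (DtNT : ℝ → ℂ)
    (hDtN : ∀ e : ℝ, DtNT e =
      -Complex.I * ω - (ω : ℂ) * e *
        Complex.sin (ω * Real.sqrt (1 + e) * a) /
        ((Real.sqrt (1 + e) : ℂ) * Complex.cos (ω * Real.sqrt (1 + e) * a) -
          Complex.I * Complex.sin (ω * Real.sqrt (1 + e) * a))) :
    ‖DtNT 0 - DtNT ε‖ / ‖DtNT 0‖ =
      ε * |Real.sin (ωε * a)| / Real.sqrt (1 + ε * Real.cos (ωε * a) ^ 2) ∧
    ε * |Real.sin (ωε * a)| / Real.sqrt (1 + ε * Real.cos (ωε * a) ^ 2) ≤ ε := by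
  have hsnn : (0:ℝ) ≤ 1 + ε := by linarith
  set s := Real.sqrt (1 + ε) with hsdef
  have hs1 : 1 ≤ s := by
    rw [show (1:ℝ) = Real.sqrt 1 by simp]
    exact Real.sqrt_le_sqrt (by linarith)
  have hs0 : (0:ℝ) < s := lt_of_lt_of_le one_pos hs1
  have hssq : s ^ 2 = 1 + ε := Real.sq_sqrt hsnn
  set θ := ωε * a with hθ
  have hθ' : ω * s * a = θ := by rw [hθ, hωε]
  -- DtNT 0
  have h0 : DtNT 0 = -Complex.I * ω := by
    rw [hDtN 0]; norm_num
  have habs0 : ‖DtNT 0‖ = ω := by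
    rw [h0]
    simp [Complex.norm_real, abs_of_pos hω]
  -- the denominator
  set D : ℂ := (s : ℂ) * Complex.cos θ - Complex.I * Complex.sin θ with hD
  have hcast : ((ω : ℂ) * (s : ℂ) * (a : ℂ)) = ((θ : ℝ) : ℂ) := by
    rw [← hθ']; push_cast; ring
  have hεform : DtNT ε = -Complex.I * ω - (ω : ℂ) * ε * Complex.sin θ / D := by
    rw [hDtN ε, hD, ← hsdef, hcast]
  -- abs of D
  have hDre : D = ((s * Real.cos θ : ℝ) : ℂ) - Complex.I * ((Real.sin θ : ℝ) : ℂ) := by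
    rw [hD, ← Complex.ofReal_sin, ← Complex.ofReal_cos]; push_cast; ring
  have hnormD : Complex.normSq D = 1 + ε * Real.cos θ ^ 2 := by
    rw [hDre]
    simp only [Complex.normSq_apply, Complex.sub_re, Complex.sub_im, Complex.mul_re,
      Complex.mul_im, Complex.I_re, Complex.I_im, Complex.ofReal_re, Complex.ofReal_im]
    have h1 : Real.sin θ ^ 2 + Real.cos θ ^ 2 = 1 := Real.sin_sq_add_cos_sq θ
    nlinarith [hssq]
  have habsD : ‖D‖ = Real.sqrt (1 + ε * Real.cos θ ^ 2) := by
    rw [Complex.norm_def, hnormD]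
  have hsqnn : (0:ℝ) ≤ 1 + ε * Real.cos θ ^ 2 := by positivity
  have hsq1 : (1:ℝ) ≤ Real.sqrt (1 + ε * Real.cos θ ^ 2) := by
    have h1 : (1:ℝ) ≤ 1 + ε * Real.cos θ ^ 2 := by nlinarith [sq_nonneg (Real.cos θ)]
    calc (1:ℝ) = Real.sqrt 1 := by simp
      _ ≤ _ := Real.sqrt_le_sqrt h1
  have hsqpos : (0:ℝ) < Real.sqrt (1 + ε * Real.cos θ ^ 2) := lt_of_lt_of_le one_pos hsq1
  -- the difference
  have hdiff : DtNT 0 - DtNT ε = (ω : ℂ) * ε * Complex.sin θ / D := by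
    rw [h0, hεform]; ring
  have habsdiff : ‖DtNT 0 - DtNT ε‖
      = ω * ε * |Real.sin θ| / Real.sqrt (1 + ε * Real.cos θ ^ 2) := by
    rw [hdiff, norm_div, norm_mul, norm_mul, habsD, ← Complex.ofReal_sin,
      Complex.norm_real, Complex.norm_real, Complex.norm_real,
      Real.norm_eq_abs, Real.norm_eq_abs, Real.norm_eq_abs,
      abs_of_pos hω, _root_.abs_of_nonneg hε]
  constructor
  · rw [habsdiff, habs0]
    field_simp
  · rw [div_le_iff₀ hsqpos]
    calc ε * |Real.sin θ| ≤ ε * 1 := by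
          exact mul_le_mul_of_nonneg_left (Real.abs_sin_le_one θ) hε
      _ = ε := mul_one ε
      _ ≤ ε * Real.sqrt (1 + ε * Real.cos θ ^ 2) := by
          nlinarith
end

section
/- Fix ω, a > 0 with sin(2ωa) ≠ 0 and cos(ωa) ≠ 0. Then as ε → 0⁺, |cot(ωa) − √(1+ε)·cot(√(1+ε)·ωa)| / |cot(ωa)| = ε·|−1/2 + ωa/sin(2ωa)| + O(ε²). -/
open Filter Asymptotics

/-- Asymptotics of the relative reflecting DtN error as `ε → 0⁺`:
`Δ_R(ε,ω) = ε·|-1/2 + ωa/sin(2ωa)| + O(ε²)`. -/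
theorem reflecting_DtN_error_asymptotics
    (ω a : ℝ) (hω : 0 < ω) (ha : 0 < a)
    (hsin2 : Real.sin (2 * ω * a) ≠ 0)
    (hcos : Real.cos (ω * a) ≠ 0) :
    (fun ε : ℝ =>
        |Real.cos (ω * a) / Real.sin (ω * a) -
          Real.sqrt (1 + ε) *
            (Real.cos (Real.sqrt (1 + ε) * ω * a) / Real.sin (Real.sqrt (1 + ε) * ω * a))| /
          |Real.cos (ω * a) / Real.sin (ω * a)| -
        ε * |(-1 / 2 : ℝ) + ω * a / Real.sin (2 * ω * a)|)
      =O[nhdsWithin (0:ℝ) (Set.Ioi 0)] (fun ε : ℝ => ε ^ 2) := by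
  have hsin : Real.sin (ω * a) ≠ 0 := by
    intro h
    apply hsin2
    rw [show (2:ℝ) * ω * a = 2 * (ω * a) by ring, Real.sin_two_mul, h]
    ring
  set K : ℝ := Real.cos (ω * a) / Real.sin (ω * a) with hKdef
  have hK : K ≠ 0 := div_ne_zero hcos hsin
  set c : ℝ := (-1 / 2 : ℝ) + ω * a / Real.sin (2 * ω * a) with hcdef
  set F : ℝ → ℝ := fun ε => K - Real.sqrt (1 + ε) *
      (Real.cos (Real.sqrt (1 + ε) * ω * a) / Real.sin (Real.sqrt (1 + ε) * ω * a)) with hFdef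
  set h : ℝ → ℝ := fun ε => F ε - ε * (c * K) with hhdef
  set g : ℝ → ℝ := fun t =>
      -((Real.cos (Real.sqrt (1 + t) * ω * a) / Real.sin (Real.sqrt (1 + t) * ω * a)) /
        (2 * Real.sqrt (1 + t)))
      + (ω * a / 2) / (Real.sin (Real.sqrt (1 + t) * ω * a)) ^ 2 - c * K with hgdef
  have hsqrt10 : Real.sqrt (1 + 0) = 1 := by norm_num
  have hsinL0 : Real.sin (Real.sqrt (1 + 0) * ω * a) ≠ 0 := by
    rw [hsqrt10, one_mul]; exact hsin
  -- the derivative of h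
  have key : ∀ t : ℝ, 0 < 1 + t → Real.sin (Real.sqrt (1 + t) * ω * a) ≠ 0 →
      HasDerivAt h (g t) t := by
    intro t h1 hsL
    have hA0 : Real.sqrt (1 + t) ≠ 0 := ne_of_gt (Real.sqrt_pos.2 h1)
    have h1' : (1 + t) ≠ 0 := ne_of_gt h1
    have hA : HasDerivAt (fun t : ℝ => Real.sqrt (1 + t)) (1 / (2 * Real.sqrt (1 + t))) t := by
      simpa using ((hasDerivAt_id t).const_add 1).sqrt h1'
    have hL : HasDerivAt (fun t : ℝ => Real.sqrt (1 + t) * ω * a)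
        (1 / (2 * Real.sqrt (1 + t)) * ω * a) t := (hA.mul_const ω).mul_const a
    have hB : HasDerivAt
        (fun t : ℝ => Real.cos (Real.sqrt (1 + t) * ω * a) / Real.sin (Real.sqrt (1 + t) * ω * a))
        ((-Real.sin (Real.sqrt (1 + t) * ω * a) * (1 / (2 * Real.sqrt (1 + t)) * ω * a) *
            Real.sin (Real.sqrt (1 + t) * ω * a) -
          Real.cos (Real.sqrt (1 + t) * ω * a) *
            (Real.cos (Real.sqrt (1 + t) * ω * a) * (1 / (2 * Real.sqrt (1 + t)) * ω * a))) /
          (Real.sin (Real.sqrt (1 + t) * ω * a)) ^ 2) t := (hL.cos).div hL.sin hsL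
    have hAB := hA.mul hB
    have hh := (hAB.const_sub K).sub ((hasDerivAt_id t).mul_const (c * K))
    convert hh using 1
    · rfl
    · rfl
    · rfl
    have hsc := Real.sin_sq_add_cos_sq (Real.sqrt (1 + t) * ω * a)
    rw [hgdef]
    field_simp
    linear_combination (-(Real.sqrt (1 + t) * ω * a)) * hsc
  -- g 0 = 0
  have hg0 : g 0 = 0 := by
    rw [hgdef]
    simp only [hsqrt10, one_mul, mul_one]
    rw [hcdef, hKdef, show (2:ℝ) * ω * a = 2 * (ω * a) by ring, Real.sin_two_mul]
    field_simp
    ring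
  -- h 0 = 0
  have hh0 : h 0 = 0 := by
    rw [hhdef]; simp [hFdef, hsqrt10, hKdef]
  -- g is differentiable at 0
  have dA : DifferentiableAt ℝ (fun t : ℝ => Real.sqrt (1 + t)) 0 :=
    (differentiableAt_id.const_add 1).sqrt (by norm_num)
  have dL : DifferentiableAt ℝ (fun t : ℝ => Real.sqrt (1 + t) * ω * a) 0 :=
    (dA.mul_const ω).mul_const a
  have dg : DifferentiableAt ℝ g 0 := by
    rw [hgdef]
    exact (((dL.cos.div dL.sin hsinL0).div (dA.const_mul 2)
      (by rw [hsqrt10]; norm_num)).neg.add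
      ((differentiableAt_const _).div ((dL.sin).pow 2) (pow_ne_zero _ hsinL0))).sub
      (differentiableAt_const _)
  -- g =O id near 0
  have hgO : g =O[nhds 0] (fun t : ℝ => t) := by
    have := dg.hasFDerivAt.isBigO_sub
    simpa [hg0] using this
  obtain ⟨C, hC0, hCw⟩ := hgO.exists_nonneg
  have hCb : ∀ᶠ x in nhds (0:ℝ), ‖g x‖ ≤ C * ‖x‖ := hCw.bound
  -- neighborhood where derivative formula is valid
  have hU : ∀ᶠ x in nhds (0:ℝ), 0 < 1 + x ∧ Real.sin (Real.sqrt (1 + x) * ω * a) ≠ 0 := by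
    have h1 : ∀ᶠ x in nhds (0:ℝ), 0 < 1 + x := by
      have : Continuous fun x : ℝ => 1 + x := continuous_const.add continuous_id
      exact (this.tendsto 0).eventually (eventually_gt_nhds (by norm_num))
    have h2 : ∀ᶠ x in nhds (0:ℝ), Real.sin (Real.sqrt (1 + x) * ω * a) ≠ 0 := by
      have hc : Continuous fun x : ℝ => Real.sin (Real.sqrt (1 + x) * ω * a) :=
        Real.continuous_sin.comp (((Real.continuous_sqrt.comp
          (continuous_const.add continuous_id)).mul continuous_const).mul continuous_const)
      have := (hc.tendsto 0).eventually (eventually_ne_nhds hsinL0)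
      simpa using this
    exact h1.and h2
  obtain ⟨δ, hδ, hball⟩ := Metric.eventually_nhds_iff_ball.1 (hCb.and hU)
  -- h =O ε^2 near 0
  have hhO : h =O[nhds 0] (fun ε : ℝ => ε ^ 2) := by
    rw [isBigO_iff]
    refine ⟨C, Metric.eventually_nhds_iff_ball.2 ⟨δ, hδ, fun x hx => ?_⟩⟩
    have hmem : ∀ t ∈ Set.uIcc (0:ℝ) x, t ∈ Metric.ball (0:ℝ) δ := by
      intro t ht
      rw [mem_ball_zero_iff]
      rw [mem_ball_zero_iff] at hx
      calc ‖t‖ ≤ ‖x‖ := by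
              rw [Set.uIcc_eq_union] at ht
              rcases ht with ht | ht
              · rcases Set.mem_Icc.1 ht with ⟨h1, h2⟩
                rw [Real.norm_eq_abs, Real.norm_eq_abs, abs_of_nonneg h1]
                exact le_trans h2 (le_abs_self x)
              · rcases Set.mem_Icc.1 ht with ⟨h1, h2⟩
                rw [Real.norm_eq_abs, Real.norm_eq_abs, abs_of_nonpos h2]
                exact le_trans (neg_le_neg h1) (neg_le_abs x)
        _ < δ := hx
    have hbound : ∀ t ∈ Set.uIcc (0:ℝ) x, ‖g t‖ ≤ C * ‖x‖ := by
      intro t ht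
      have h1 := (hball t (hmem t ht)).1
      refine le_trans h1 (mul_le_mul_of_nonneg_left ?_ hC0)
      rw [mem_ball_zero_iff] at hx
      have := hmem t ht
      rw [mem_ball_zero_iff] at this
      -- ‖t‖ ≤ ‖x‖ again
      rw [Set.uIcc_eq_union] at ht
      rcases ht with ht | ht
      · rcases Set.mem_Icc.1 ht with ⟨h1', h2⟩
        rw [Real.norm_eq_abs, Real.norm_eq_abs, abs_of_nonneg h1']
        exact le_trans h2 (le_abs_self x)
      · rcases Set.mem_Icc.1 ht with ⟨h1', h2⟩
        rw [Real.norm_eq_abs, Real.norm_eq_abs, abs_of_nonpos h2]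
        exact le_trans (neg_le_neg h1') (neg_le_abs x)
    have hder : ∀ t ∈ Set.uIcc (0:ℝ) x, HasDerivWithinAt h (g t) (Set.uIcc (0:ℝ) x) t := by
      intro t ht
      have hmem' := hball t (hmem t ht)
      exact (key t hmem'.2.1 hmem'.2.2).hasDerivWithinAt
    have := Convex.norm_image_sub_le_of_norm_hasDerivWithin_le hder hbound
      (convex_uIcc 0 x) Set.left_mem_uIcc Set.right_mem_uIcc
    rw [hh0, sub_zero, sub_zero] at this
    calc ‖h x‖ ≤ C * ‖x‖ * ‖x‖ := this
      _ = C * ‖x ^ 2‖ := by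
          rw [Real.norm_eq_abs, Real.norm_eq_abs, abs_pow]; ring
  -- final comparison on Ioi 0
  have hT : (fun ε : ℝ => |F ε| / |K| - ε * |c|) =O[nhdsWithin (0:ℝ) (Set.Ioi 0)] h := by
    rw [isBigO_iff]
    refine ⟨|K|⁻¹, ?_⟩
    filter_upwards [self_mem_nhdsWithin] with x hx
    have hxpos : (0:ℝ) < x := hx
    have e1 : |F x| / |K| = |F x / K| := (abs_div _ _).symm
    have e2 : x * |c| = |x * c| := by
      rw [abs_mul, abs_of_nonneg hxpos.le]
    rw [Real.norm_eq_abs, e1, e2]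
    have e3 : F x / K - x * c = h x / K := by
      rw [hhdef]
      field_simp
    calc |(|F x / K| - |x * c|)| ≤ |F x / K - x * c| := abs_abs_sub_abs_le_abs_sub _ _
      _ = |K|⁻¹ * ‖h x‖ := by
          rw [e3, abs_div, Real.norm_eq_abs]; ring
  exact hT.trans (hhO.mono nhdsWithin_le_nhds)
end
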